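/- arXiv:1007.0058 — 3 statements merged into one kernel-verified Lean document; each statement's English description precedes it below -/
import Mathlib

section
/- Let A be a unital C*-algebra and a ∈ A with Im a := (a - a*)/(2i) ≥ ε·1 for some ε > 0. Then a is invertible in A and Im(a⁻¹) ≤ 0; more precisely, Im(a⁻¹) = -(√v)⁻¹ · (((√v)⁻¹ u (√v)⁻¹)² + 1)⁻¹ · (√v)⁻¹ < 0, where u = Re a and v = Im a. -/
open scoped ComplexOrder

variable {A : Type*}

/-- Imaginary part of an element of a complex star algebra: `(a - a*)/(2i)`. -/
noncomputable def aIm [Ring A] [StarRing A] [Module ℂ A] (a : A) : A :=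
  ((2 * Complex.I)⁻¹ : ℂ) • (a - star a)

/-- Real part of an element of a complex star algebra: `(a + a*)/2`. -/
noncomputable def aRe [Ring A] [StarRing A] [Module ℂ A] (a : A) : A :=
  ((2 : ℂ)⁻¹) • (a + star a)

section aux

variable [Ring A] [StarRing A] [Module ℂ A] [StarModule ℂ A]

lemma aIm_isSelfAdjoint (a : A) : IsSelfAdjoint (aIm a) := by
  have hc : (star ((2 * Complex.I)⁻¹ : ℂ)) = -(2 * Complex.I)⁻¹ := by
    simp [Complex.ext_iff]
  rw [IsSelfAdjoint, aIm, star_smul, star_sub, star_star, hc, neg_smul, ← smul_neg, neg_sub]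

lemma aRe_isSelfAdjoint (a : A) : IsSelfAdjoint (aRe a) := by
  have hc : (star ((2 : ℂ)⁻¹ : ℂ)) = (2 : ℂ)⁻¹ := by simp [Complex.ext_iff]
  rw [IsSelfAdjoint, aRe, star_smul, star_add, star_star, hc, add_comm]

omit [StarModule ℂ A] in
lemma aRe_add_I_smul_aIm (a : A) : aRe a + Complex.I • aIm a = a := by
  rw [aRe, aIm, smul_smul]
  have h1 : Complex.I * (2 * Complex.I)⁻¹ = (2 : ℂ)⁻¹ := by
    field_simp
  rw [h1, ← smul_add]
  have h2 : (a + star a) + (a - star a) = (2 : ℂ) • a := by rw [two_smul]; abel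
  rw [h2, smul_smul]
  norm_num

end aux

/-- If `Im a ≥ ε·1` for some `ε > 0`, then `a` is invertible, the imaginary part of its
inverse is given by the explicit formula `-(√v)⁻¹(((√v)⁻¹u(√v)⁻¹)² + 1)⁻¹(√v)⁻¹`
(with `u = Re a`, `v = Im a`), and `Im (a⁻¹) < 0`. -/
theorem im_inverse_of_im_pos [CStarAlgebra A] [PartialOrder A] [StarOrderedRing A]
    (a : A) (hε : ∃ ε : ℝ, 0 < ε ∧ (ε : ℂ) • (1 : A) ≤ aIm a) :
    IsUnit a ∧
      aIm (Ring.inverse a) =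
        -(Ring.inverse (CFC.sqrt (aIm a)) *
            Ring.inverse
              ((Ring.inverse (CFC.sqrt (aIm a)) * aRe a * Ring.inverse (CFC.sqrt (aIm a))) ^ 2
                + 1) *
          Ring.inverse (CFC.sqrt (aIm a))) ∧
      ∃ δ : ℝ, 0 < δ ∧ aIm (Ring.inverse a) ≤ -((δ : ℂ) • (1 : A)) := by
  rcases subsingleton_or_nontrivial A with hA | hA
  · exact ⟨isUnit_of_subsingleton a, Subsingleton.elim _ _, 1, one_pos,
      le_of_eq (Subsingleton.elim _ _)⟩
  obtain ⟨ε, hε0, hεv⟩ := hε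
  have hsmul : ∀ (r : ℝ) (x : A), (r : ℂ) • x = r • x := fun r x => by
    rw [← Complex.coe_algebraMap, algebraMap_smul]
  have halg_nonneg : ∀ r : ℝ, 0 ≤ r → (0 : A) ≤ algebraMap ℝ A r := by
    intro r hr
    have : algebraMap ℝ A r = star (algebraMap ℝ A (Real.sqrt r)) * algebraMap ℝ A (Real.sqrt r) := by
      rw [IsSelfAdjoint.star_eq (IsSelfAdjoint.algebraMap A (isSelfAdjoint_iff.mpr rfl)),
        ← map_mul, Real.mul_self_sqrt hr]
    rw [this]
    exact star_mul_self_nonneg _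
  set v := aIm a with hv_def
  set u := aRe a with hu_def
  have hvsa : IsSelfAdjoint v := aIm_isSelfAdjoint a
  have husa : IsSelfAdjoint u := aRe_isSelfAdjoint a
  have hεA : (ε : ℂ) • (1 : A) = algebraMap ℝ A ε := by
    rw [hsmul, Algebra.algebraMap_eq_smul_one]
  have hεu : IsUnit ((ε : ℂ) • (1 : A)) := by
    rw [hεA]; exact (algebraMap ℝ A).isUnit_map (isUnit_iff_ne_zero.mpr hε0.ne')
  have hε_nonneg : (0 : A) ≤ (ε : ℂ) • (1 : A) := hεA ▸ halg_nonneg ε hε0.le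
  have hv0 : (0 : A) ≤ v := hε_nonneg.trans hεv
  have hvu : IsUnit v := CStarAlgebra.isUnit_of_le _ hεv ⟨hε_nonneg, hεu⟩
  set s := CFC.sqrt v with hs_def
  have hs0 : (0 : A) ≤ s := CFC.sqrt_nonneg v
  have hssa : IsSelfAdjoint s := .of_nonneg hs0
  have hs2 : s * s = v := CFC.sqrt_mul_sqrt_self v hv0
  have hsv : Commute s v := by rw [← hs2]; exact (Commute.refl s).mul_right (Commute.refl s)
  have hsu : IsUnit s := by
    have hcomm : Commute s (Ring.inverse v) := by
      have h1 : Commute s (hvu.unit : A) := by rwa [hvu.unit_spec]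
      have h2 := h1.units_inv_right
      rwa [← Ring.inverse_unit, hvu.unit_spec] at h2
    refine isUnit_iff_exists.mpr ⟨s * Ring.inverse v, ?_, ?_⟩
    · rw [← mul_assoc, hs2, Ring.mul_inverse_cancel _ hvu]
    · rw [mul_assoc, ← hcomm.eq, ← mul_assoc, hs2, Ring.mul_inverse_cancel _ hvu]
  set S := hsu.unit with hS_def
  have hSval : (S : A) = s := hsu.unit_spec
  set t := ((S⁻¹ : Aˣ) : A) with ht_def
  have hst : s * t = 1 := by rw [← hSval, ht_def]; exact S.mul_inv
  have hts : t * s = 1 := by rw [← hSval, ht_def]; exact S.inv_mul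
  have ht0 : (0 : A) ≤ t := CFC.inv_nonneg_of_nonneg S (by rwa [hSval])
  have htsa : IsSelfAdjoint t := .of_nonneg ht0
  have hsinv : Ring.inverse s = t := by rw [← hSval, Ring.inverse_unit]
  set w := t * u * t with hw_def
  have hwsa : IsSelfAdjoint w := by
    rw [hw_def, IsSelfAdjoint]
    simp only [star_mul, htsa.star_eq, husa.star_eq, mul_assoc]
  have hw0sq : (0 : A) ≤ w ^ 2 := by
    rw [sq]; nth_rw 1 [← hwsa.star_eq]; exact star_mul_self_nonneg w
  have h1c : (1 : A) ≤ w ^ 2 + 1 := le_add_of_nonneg_left hw0sq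
  have hc0 : (0 : A) ≤ w ^ 2 + 1 := zero_le_one.trans h1c
  have hcu : IsUnit (w ^ 2 + 1) := CStarAlgebra.isUnit_of_le 1 h1c ⟨zero_le_one, isUnit_one⟩
  set C := hcu.unit with hC_def
  have hCval : (C : A) = w ^ 2 + 1 := hcu.unit_spec
  set cinv := ((C⁻¹ : Aˣ) : A) with hcinv_def
  have hcinv : Ring.inverse (w ^ 2 + 1) = cinv := by rw [← hCval, Ring.inverse_unit]
  have hccinv : (w ^ 2 + 1) * cinv = 1 := by rw [← hCval, hcinv_def]; exact C.mul_inv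
  have hcinvc : cinv * (w ^ 2 + 1) = 1 := by rw [← hCval, hcinv_def]; exact C.inv_mul
  have hcinv0 : (0 : A) ≤ cinv := CFC.inv_nonneg_of_nonneg C (by rwa [hCval])
  have hcinvsa : IsSelfAdjoint cinv := .of_nonneg hcinv0
  have hwcinv : Commute w cinv := by
    have h1 : Commute w (C : A) := by
      rw [hCval]
      exact (Commute.refl w |>.pow_right 2).add_right (Commute.one_right w)
    exact h1.units_inv_right
  have hcomm' : cinv * (w + Complex.I • 1) = (w + Complex.I • 1) * cinv := by
    rw [mul_add, add_mul, ← hwcinv.eq, mul_smul_comm, smul_mul_assoc, mul_one, one_mul]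
  have hkeys : ∀ x : A, (x - Complex.I • 1) * (x + Complex.I • 1) = x ^ 2 + 1 ∧
      (x + Complex.I • 1) * (x - Complex.I • 1) = x ^ 2 + 1 := by
    intro x
    have hj1 : (Complex.I • (1 : A)) * x = Complex.I • x := by rw [smul_mul_assoc, one_mul]
    have hj2 : x * (Complex.I • (1 : A)) = Complex.I • x := by rw [mul_smul_comm, mul_one]
    have hj3 : (Complex.I • (1 : A)) * (Complex.I • (1 : A)) = -1 := by
      rw [smul_mul_assoc, one_mul, smul_smul, Complex.I_mul_I, neg_one_smul]
    constructor
    · rw [sub_mul, mul_add, mul_add, hj1, hj2, hj3, sq]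
      abel
    · rw [mul_sub, add_mul, add_mul, hj1, hj2, hj3, sq]
      abel
  have hkey1 : (w - Complex.I • 1) * (w + Complex.I • 1) = w ^ 2 + 1 := (hkeys w).1
  have hkey2 : (w + Complex.I • 1) * (w - Complex.I • 1) = w ^ 2 + 1 := (hkeys w).2
  have hbc : (w + Complex.I • 1) * ((w - Complex.I • 1) * cinv) = 1 := by
    rw [← mul_assoc, hkey2, hccinv]
  have hcb : ((w - Complex.I • 1) * cinv) * (w + Complex.I • 1) = 1 := by
    rw [mul_assoc, hcomm', ← mul_assoc, hkey1, hccinv]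
  set B : Aˣ := ⟨w + Complex.I • 1, (w - Complex.I • 1) * cinv, hbc, hcb⟩ with hB_def
  have ha_eq : a = s * (w + Complex.I • 1) * s := by
    have h1 : s * w * s = u := by
      rw [hw_def]
      simp only [mul_assoc, hts, mul_one]
      rw [← mul_assoc, hst, one_mul]
    have h2 : s * (w + Complex.I • 1) * s = s * w * s + Complex.I • (s * s) := by
      rw [mul_add, add_mul, mul_smul_comm, smul_mul_assoc, mul_one]
    rw [h2, h1, hs2, hv_def, hu_def, aRe_add_I_smul_aIm a]
  have hU : (((S * B * S : Aˣ)) : A) = a := by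
    rw [Units.val_mul, Units.val_mul, hSval]
    exact ha_eq.symm
  have hau : IsUnit a := ⟨S * B * S, hU⟩
  have hBinv : ((B⁻¹ : Aˣ) : A) = (w - Complex.I • 1) * cinv := rfl
  have hainv : Ring.inverse a = t * ((w - Complex.I • 1) * cinv) * t := by
    rw [← hU, Ring.inverse_unit, mul_inv_rev, mul_inv_rev, Units.val_mul, Units.val_mul,
      hBinv, ht_def]
    simp only [mul_assoc]
  have hstarbinv : star ((w - Complex.I • 1) * cinv) = (w + Complex.I • 1) * cinv := by
    rw [star_mul, hcinvsa.star_eq, star_sub, hwsa.star_eq, star_smul, star_one,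
      Complex.star_def, Complex.conj_I, neg_smul, sub_neg_eq_add, hcomm']
  have hdiff : (w - Complex.I • 1) - (w + Complex.I • 1) = (-(2 * Complex.I)) • (1 : A) := by
    have h2I : ((2 : ℂ) * Complex.I) = Complex.I + Complex.I := by ring
    rw [neg_smul, h2I, add_smul]
    abel
  have him : aIm (Ring.inverse a) = -(t * cinv * t) := by
    rw [hainv, aIm, star_mul, star_mul, htsa.star_eq, hstarbinv]
    have hre : t * ((w - Complex.I • 1) * cinv) * t - t * ((w + Complex.I • 1) * cinv * t)
        = (-(2 * Complex.I)) • (t * cinv * t) := by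
      simp only [mul_assoc]
      rw [← mul_sub, ← sub_mul, hdiff, smul_mul_assoc, one_mul, mul_smul_comm]
    rw [hre, smul_smul]
    have : ((2 * Complex.I)⁻¹ : ℂ) * (-(2 * Complex.I)) = -1 := by
      rw [mul_neg, inv_mul_cancel₀ (by simp [Complex.ext_iff] : (2 : ℂ) * Complex.I ≠ 0)]
    rw [this, neg_one_smul]
  have hm0 : (0 : A) ≤ s * (w ^ 2 + 1) * s := by
    have h := star_left_conjugate_nonneg hc0 s
    rwa [hssa.star_eq] at h
  have hmsa : IsSelfAdjoint (s * (w ^ 2 + 1) * s) := .of_nonneg hm0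
  set K := ‖s * (w ^ 2 + 1) * s‖ with hK_def
  have hMval : ((S * C * S : Aˣ) : A) = s * (w ^ 2 + 1) * s := by
    rw [Units.val_mul, Units.val_mul, hSval, hCval]
  have hK0 : 0 < K := by
    rw [hK_def, norm_pos_iff]
    intro h
    have h1 : (1 : A) = (((S * C * S : Aˣ)⁻¹ : Aˣ) : A) * ((S * C * S : Aˣ) : A) :=
      (Units.inv_mul _).symm
    rw [hMval, h, mul_zero] at h1
    exact one_ne_zero h1
  have hKu : IsUnit (algebraMap ℝ A K) :=
    (algebraMap ℝ A).isUnit_map (isUnit_iff_ne_zero.mpr hK0.ne')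
  have hDval : (hKu.unit : A) = algebraMap ℝ A K := hKu.unit_spec
  have hineq : ((hKu.unit⁻¹ : Aˣ) : A) ≤ (((S * C * S : Aˣ)⁻¹ : Aˣ) : A) :=
    CStarAlgebra.inv_le_inv (by rw [hMval]; exact hm0)
      (by rw [hMval, hDval]; exact hmsa.le_algebraMap_norm_self)
  have hDinv : ((hKu.unit⁻¹ : Aˣ) : A) = algebraMap ℝ A K⁻¹ := by
    have h1 : algebraMap ℝ A K * algebraMap ℝ A K⁻¹ = 1 := by
      rw [← map_mul, mul_inv_cancel₀ hK0.ne', map_one]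
    calc ((hKu.unit⁻¹ : Aˣ) : A)
        = ((hKu.unit⁻¹ : Aˣ) : A) * ((hKu.unit : A) * algebraMap ℝ A K⁻¹) := by
          rw [hDval, h1, mul_one]
      _ = algebraMap ℝ A K⁻¹ := Units.inv_mul_cancel_left _ _
  have hMinv : (((S * C * S : Aˣ)⁻¹ : Aˣ) : A) = t * cinv * t := by
    rw [mul_inv_rev, mul_inv_rev, Units.val_mul, Units.val_mul, ht_def, hcinv_def, mul_assoc]
  refine ⟨hau, ?_, K⁻¹, inv_pos.mpr hK0, ?_⟩
  · rw [hsinv, ← hw_def, hcinv, him]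
  · rw [him]
    have h2 : algebraMap ℝ A K⁻¹ ≤ t * cinv * t := by rw [← hDinv, ← hMinv]; exact hineq
    have h3 : ((K⁻¹ : ℝ) : ℂ) • (1 : A) = algebraMap ℝ A K⁻¹ := by
      rw [hsmul, Algebra.algebraMap_eq_smul_one]
    rw [h3]
    exact neg_le_neg h2
end

section
/- Let {k_n} be an increasing sequence of positive integers and {μ_n} a sequence of compactly supported probability measures on ℝ with Boolean transforms B_{μ_n}. Then the Boolean convolution powers μ_n^{⊎ k_n} converge in moments to a compactly supported probability measure μ if and only if for all z in a neighborhood of 0, lim_{n→∞} k_n·(M_{μ_n}(z) - 1) = B_μ(z), where M denotes the moment generating function. -/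
open MeasureTheory Filter

/-- Moment generating function `M_σ(z) = ∫ (1 - tz)⁻¹ dσ(t)`. -/
noncomputable def momGen (σ : Measure ℝ) (z : ℂ) : ℂ :=
  ∫ t : ℝ, ((1 : ℂ) - (t : ℂ) * z)⁻¹ ∂σ

/-- Boolean transform `B_σ(z) = 1 - M_σ(z)⁻¹`, i.e. the solution of `M_σ - 1 = B_σ·M_σ`. -/
noncomputable def boolT (σ : Measure ℝ) (z : ℂ) : ℂ := 1 - (momGen σ z)⁻¹

/-- `p`-th moment of `σ`. -/
noncomputable def moment (σ : Measure ℝ) (p : ℕ) : ℝ := ∫ t : ℝ, t ^ p ∂σ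

lemma ae_abs_le {M : ℝ} {σ : Measure ℝ} (h : σ (Set.Icc (-M) M)ᶜ = 0) :
    ∀ᵐ t ∂σ, |t| ≤ M := by
  have h2 : ∀ᵐ t ∂σ, t ∈ Set.Icc (-M) M := by
    rw [ae_iff]
    simpa [Set.compl_def] using h
  filter_upwards [h2] with t ht
  rw [abs_le]; exact ⟨ht.1, ht.2⟩

lemma moment_zero {σ : Measure ℝ} (hσ : IsProbabilityMeasure σ) : moment σ 0 = 1 := by
  simp [moment]

lemma abs_moment_le {M : ℝ} (hM : 0 ≤ M) {σ : Measure ℝ} (hσ : IsProbabilityMeasure σ)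
    (h : σ (Set.Icc (-M) M)ᶜ = 0) (p : ℕ) : |moment σ p| ≤ M ^ p := by
  have := norm_integral_le_of_norm_le_const (μ := σ) (C := M ^ p)
      (f := fun t : ℝ => t ^ p) ?_
  · simpa [moment] using this
  · filter_upwards [ae_abs_le h] with t ht
    rw [Real.norm_eq_abs, abs_pow]
    exact pow_le_pow_left₀ (abs_nonneg t) ht p

lemma hasSum_moment_momGen {M : ℝ} (hM : 0 ≤ M) {σ : Measure ℝ} (hσ : IsProbabilityMeasure σ)
    (h : σ (Set.Icc (-M) M)ᶜ = 0) {z : ℂ} (hz : M * ‖z‖ < 1) :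
    HasSum (fun p => ((moment σ p : ℝ) : ℂ) * z ^ p) (momGen σ z) := by
  set F : ℕ → ℝ → ℂ := fun p t => ((t : ℂ) * z) ^ p with hF
  have hmeas : ∀ p, AEStronglyMeasurable (F p) σ := fun p =>
    ((Complex.continuous_ofReal.mul continuous_const).pow p).aestronglyMeasurable
  have hbd : ∀ p, ∀ᵐ t ∂σ, ‖F p t‖ ≤ (M * ‖z‖) ^ p := by
    intro p
    filter_upwards [ae_abs_le h] with t ht
    rw [hF]
    simp only [norm_pow, norm_mul, Complex.norm_real, Real.norm_eq_abs]
    exact pow_le_pow_left₀ (by positivity) (mul_le_mul_of_nonneg_right ht (norm_nonneg z)) p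
  have hint : ∀ p, Integrable (F p) σ := by
    intro p
    exact Integrable.mono' (integrable_const ((M * ‖z‖) ^ p)) (hmeas p) (hbd p)
  have hsumnorm : Summable fun p => ∫ t, ‖F p t‖ ∂σ := by
    apply Summable.of_nonneg_of_le (fun p => integral_nonneg fun t => norm_nonneg _)
      (fun p => ?_) (summable_geometric_of_lt_one (by positivity) hz)
    calc ∫ t, ‖F p t‖ ∂σ ≤ ∫ _, (M * ‖z‖) ^ p ∂σ :=
          integral_mono_ae (hint p).norm (integrable_const _) (hbd p)
      _ = (M * ‖z‖) ^ p := by simp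
  have hkey := hasSum_integral_of_summable_integral_norm hint hsumnorm
  have heq1 : ∀ p, (∫ t, F p t ∂σ) = ((moment σ p : ℝ) : ℂ) * z ^ p := by
    intro p
    rw [hF]
    simp only [mul_pow]
    rw [integral_mul_const]
    congr 1
    rw [show (fun t : ℝ => ((t : ℂ)) ^ p) = fun t : ℝ => ((t ^ p : ℝ) : ℂ) by
      funext t; push_cast; ring]
    exact integral_ofReal
  have heq2 : (∫ t, (∑' p, F p t) ∂σ) = momGen σ z := by
    apply integral_congr_ae
    filter_upwards [ae_abs_le h] with t ht
    have htz : ‖(t : ℂ) * z‖ < 1 := by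
      rw [norm_mul, Complex.norm_real, Real.norm_eq_abs]
      calc |t| * ‖z‖ ≤ M * ‖z‖ := mul_le_mul_of_nonneg_right ht (norm_nonneg z)
        _ < 1 := hz
    rw [hF]
    simpa using tsum_geometric_of_norm_lt_one htz
  rw [heq2] at hkey
  simpa only [heq1] using hkey

lemma momGen_sub_one_norm_le {M : ℝ} (hM : 0 ≤ M) {σ : Measure ℝ} (hσ : IsProbabilityMeasure σ)
    (h : σ (Set.Icc (-M) M)ᶜ = 0) {z : ℂ} (hz : M * ‖z‖ < 1 / 2) :
    ‖momGen σ z - 1‖ ≤ 2 * (M * ‖z‖) := by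
  set c := M * ‖z‖ with hc
  have hc0 : 0 ≤ c := by positivity
  have hc1 : c < 1 := by linarith
  have hs := hasSum_moment_momGen hM hσ h (by linarith : M * ‖z‖ < 1)
  set f : ℕ → ℂ := fun p => ((moment σ p : ℝ) : ℂ) * z ^ p with hf
  have hf0 : f 0 = 1 := by simp [hf, moment_zero hσ]
  have htail : HasSum (fun p => f (p + 1)) (momGen σ z - 1) := by
    have h2 := (hasSum_nat_add_iff' (f := f) 1).mpr hs
    simpa [hf0] using h2
  have hbound : ∀ p, ‖f (p + 1)‖ ≤ c * c ^ p := by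
    intro p
    rw [hf]
    simp only [norm_mul, Complex.norm_real, Real.norm_eq_abs, norm_pow]
    calc |moment σ (p+1)| * ‖z‖ ^ (p+1) ≤ M ^ (p+1) * ‖z‖ ^ (p+1) :=
          mul_le_mul_of_nonneg_right (abs_moment_le hM hσ h (p+1)) (by positivity)
      _ = c * c ^ p := by rw [hc, mul_pow]; ring
  have hgeom : HasSum (fun p => c * c ^ p) (c * (1 - c)⁻¹) :=
    (hasSum_geometric_of_lt_one hc0 hc1).mul_left c
  have := tsum_of_norm_bounded hgeom hbound
  rw [htail.tsum_eq] at this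
  calc ‖momGen σ z - 1‖ ≤ c * (1 - c)⁻¹ := this
    _ ≤ c * 2 := by
        apply mul_le_mul_of_nonneg_left _ hc0
        rw [show (2:ℝ) = (1/2:ℝ)⁻¹ by norm_num]
        exact inv_anti₀ (by norm_num) (by linarith)
    _ = 2 * c := by ring

lemma momGen_ne_zero {M : ℝ} (hM : 0 ≤ M) {σ : Measure ℝ} (hσ : IsProbabilityMeasure σ)
    (h : σ (Set.Icc (-M) M)ᶜ = 0) {z : ℂ} (hz : M * ‖z‖ < 1 / 2) :
    momGen σ z ≠ 0 := by
  intro h0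
  have := momGen_sub_one_norm_le hM hσ h hz
  rw [h0] at this
  simp only [zero_sub, norm_neg, norm_one] at this
  linarith

lemma norm_momGen_inv_le {M : ℝ} (hM : 0 ≤ M) {σ : Measure ℝ} (hσ : IsProbabilityMeasure σ)
    (h : σ (Set.Icc (-M) M)ᶜ = 0) {z : ℂ} (hz : M * ‖z‖ < 1 / 2) :
    ‖(momGen σ z)⁻¹‖ ≤ (1 - 2 * (M * ‖z‖))⁻¹ := by
  have h1 := momGen_sub_one_norm_le hM hσ h hz
  have h2 : 1 - 2 * (M * ‖z‖) ≤ ‖momGen σ z‖ := by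
    have := norm_sub_norm_le (momGen σ z) 1
    rw [norm_one] at this
    have h3 : ‖momGen σ z‖ - 1 ≥ -(2 * (M * ‖z‖)) := by
      have := abs_norm_sub_norm_le (momGen σ z) 1
      rw [norm_one] at this
      have := (abs_le.mp (this.trans h1)).1
      linarith
    linarith
  rw [norm_inv]
  exact inv_anti₀ (by linarith) h2

lemma coeff_tendsto {M : ℝ} (hM : 0 < M) {a : ℕ → ℕ → ℂ} {b : ℕ → ℂ}
    (ha : ∀ n p, ‖a n p‖ ≤ M ^ p) (hb : ∀ p, ‖b p‖ ≤ M ^ p)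
    {r : ℝ} (hr : 0 < r) (hrM : M * r ≤ 1 / 2)
    (h : ∀ x : ℝ, 0 < x → x < r →
      Tendsto (fun n => ∑' p, a n p * (x : ℂ) ^ p) atTop
        (nhds (∑' p, b p * (x : ℂ) ^ p))) :
    ∀ p, Tendsto (fun n => a n p) atTop (nhds (b p)) := by
  intro p
  induction p using Nat.strong_induction_on with
  | _ p ih =>
  rw [Metric.tendsto_atTop]
  intro ε hε
  -- choose a small positive x
  obtain ⟨x, hx0, hxr, hxs⟩ : ∃ x : ℝ, 0 < x ∧ x < r ∧ 4 * M ^ (p + 1) * x < ε / 3 := by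
    refine ⟨min (r / 2) (ε / (3 * (4 * M ^ (p + 1) + 1))), by positivity, ?_, ?_⟩
    · calc min (r / 2) _ ≤ r / 2 := min_le_left _ _
        _ < r := by linarith
    · have h1 : min (r / 2) (ε / (3 * (4 * M ^ (p + 1) + 1))) ≤
          ε / (3 * (4 * M ^ (p + 1) + 1)) := min_le_right _ _
      have h2 : (0:ℝ) < 4 * M ^ (p + 1) + 1 := by positivity
      calc 4 * M ^ (p + 1) * min (r / 2) (ε / (3 * (4 * M ^ (p + 1) + 1)))
          ≤ 4 * M ^ (p + 1) * (ε / (3 * (4 * M ^ (p + 1) + 1))) :=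
            mul_le_mul_of_nonneg_left h1 (by positivity)
        _ < ε / 3 := by
            rw [mul_div_assoc', div_lt_div_iff₀ (by positivity) (by norm_num)]
            nlinarith [pow_pos hM (p + 1)]
  have hMx : M * x < 1 / 2 := lt_of_lt_of_le (by nlinarith) hrM
  have hMx0 : 0 ≤ M * x := by positivity
  have hMx1 : M * x < 1 := by linarith
  have hxc : ‖(x : ℂ)‖ = x := by rw [Complex.norm_real, Real.norm_of_nonneg hx0.le]
  -- summability
  have hsum : ∀ (c : ℕ → ℂ), (∀ j, ‖c j‖ ≤ M ^ j) → Summable (fun j => c j * (x : ℂ) ^ j) := by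
    intro c hc
    apply Summable.of_norm_bounded (g := fun j => (M * x) ^ j)
      (summable_geometric_of_lt_one hMx0 hMx1)
    intro j
    rw [norm_mul, norm_pow, hxc, mul_pow]
    exact mul_le_mul_of_nonneg_right (hc j) (by positivity)
  -- F n := difference of the sums
  set F : ℕ → ℂ := fun n => (∑' j, a n j * (x : ℂ) ^ j) - ∑' j, b j * (x : ℂ) ^ j with hFdef
  have hF0 : Tendsto F atTop (nhds 0) := by
    rw [hFdef]
    have := (h x hx0 hxr).sub (tendsto_const_nhds (x := ∑' (j : ℕ), b j * (x : ℂ) ^ j))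
    rwa [sub_self] at this
  -- key pointwise inequality
  have key : ∀ n, ‖a n p - b p‖ * x ^ p ≤
      ‖F n‖ + (∑ j ∈ Finset.range p, ‖a n j - b j‖ * x ^ j) + 4 * (M * x) ^ (p + 1) := by
    intro n
    have hsa := hsum (a n) (ha n)
    have hsb := hsum b hb
    have hsc : Summable (fun j => (a n j - b j) * (x : ℂ) ^ j) := by
      have := hsa.sub hsb
      simpa [sub_mul] using this
    have htsum : ∑' j, (a n j - b j) * (x : ℂ) ^ j = F n := by
      rw [hFdef]
      simp only [sub_mul]
      exact Summable.tsum_sub hsa hsb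
    have hsplit := Summable.sum_add_tsum_nat_add (p + 1) hsc
    have heq : (a n p - b p) * (x : ℂ) ^ p =
        F n - (∑ j ∈ Finset.range p, (a n j - b j) * (x : ℂ) ^ j) -
          ∑' j, (a n (j + (p + 1)) - b (j + (p + 1))) * (x : ℂ) ^ (j + (p + 1)) := by
      rw [← htsum, ← hsplit, Finset.sum_range_succ]
      ring
    have htailbd : ‖∑' j, (a n (j + (p + 1)) - b (j + (p + 1))) * (x : ℂ) ^ (j + (p + 1))‖
        ≤ 4 * (M * x) ^ (p + 1) := by
      have hgeom : HasSum (fun j => 2 * (M * x) ^ (p + 1) * (M * x) ^ j)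
          (2 * (M * x) ^ (p + 1) * (1 - M * x)⁻¹) :=
        (hasSum_geometric_of_lt_one hMx0 hMx1).mul_left _
      have hterm : ∀ j, ‖(a n (j + (p + 1)) - b (j + (p + 1))) * (x : ℂ) ^ (j + (p + 1))‖
          ≤ 2 * (M * x) ^ (p + 1) * (M * x) ^ j := by
        intro j
        rw [norm_mul, norm_pow, hxc]
        calc ‖a n (j + (p + 1)) - b (j + (p + 1))‖ * x ^ (j + (p + 1))
            ≤ 2 * M ^ (j + (p + 1)) * x ^ (j + (p + 1)) := by
              apply mul_le_mul_of_nonneg_right _ (by positivity)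
              calc ‖a n (j + (p + 1)) - b (j + (p + 1))‖
                  ≤ ‖a n (j + (p + 1))‖ + ‖b (j + (p + 1))‖ := norm_sub_le _ _
                _ ≤ M ^ (j + (p + 1)) + M ^ (j + (p + 1)) := add_le_add (ha _ _) (hb _)
                _ = 2 * M ^ (j + (p + 1)) := by ring
          _ = 2 * (M * x) ^ (p + 1) * (M * x) ^ j := by
              rw [mul_pow, pow_add, mul_pow]; ring
      calc ‖∑' j, (a n (j + (p + 1)) - b (j + (p + 1))) * (x : ℂ) ^ (j + (p + 1))‖
          ≤ 2 * (M * x) ^ (p + 1) * (1 - M * x)⁻¹ := tsum_of_norm_bounded hgeom hterm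
        _ ≤ 2 * (M * x) ^ (p + 1) * 2 := by
            apply mul_le_mul_of_nonneg_left _ (by positivity)
            rw [show (2:ℝ) = (1/2:ℝ)⁻¹ by norm_num]
            exact inv_anti₀ (by norm_num) (by linarith)
        _ = 4 * (M * x) ^ (p + 1) := by ring
    have hfinbd : ‖∑ j ∈ Finset.range p, (a n j - b j) * (x : ℂ) ^ j‖
        ≤ ∑ j ∈ Finset.range p, ‖a n j - b j‖ * x ^ j := by
      refine (norm_sum_le _ _).trans (le_of_eq ?_)
      apply Finset.sum_congr rfl
      intro j _
      rw [norm_mul, norm_pow, hxc]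
    calc ‖a n p - b p‖ * x ^ p = ‖(a n p - b p) * (x : ℂ) ^ p‖ := by
          rw [norm_mul, norm_pow, hxc]
      _ ≤ ‖F n‖ + ‖∑ j ∈ Finset.range p, (a n j - b j) * (x : ℂ) ^ j‖ +
          ‖∑' j, (a n (j + (p + 1)) - b (j + (p + 1))) * (x : ℂ) ^ (j + (p + 1))‖ := by
            rw [heq]
            exact (norm_sub_le _ _).trans (add_le_add (norm_sub_le _ _) le_rfl)
      _ ≤ _ := by
            apply add_le_add (add_le_add le_rfl hfinbd) htailbd
  -- finite sum tends to zero
  have hS : Tendsto (fun n => ∑ j ∈ Finset.range p, ‖a n j - b j‖ * x ^ j) atTop (nhds 0) := by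
    have : ∀ j ∈ Finset.range p, Tendsto (fun n => ‖a n j - b j‖ * x ^ j) atTop (nhds 0) := by
      intro j hj
      have h1 : Tendsto (fun n => a n j - b j) atTop (nhds 0) := by
        have := (ih j (Finset.mem_range.mp hj)).sub (tendsto_const_nhds (x := b j))
        rwa [sub_self] at this
      have h2 : Tendsto (fun n => ‖a n j - b j‖) atTop (nhds 0) := by
        simpa using h1.norm
      simpa using h2.mul_const (x ^ j)
    have := tendsto_finset_sum (Finset.range p) this
    simpa using this
  have hxp : (0:ℝ) < x ^ p := by positivity
  -- eventually bounds
  have hF' : ∀ᶠ n in atTop, ‖F n‖ < ε / 3 * x ^ p := by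
    have := hF0.norm
    simp only [norm_zero] at this
    exact this.eventually_lt_const (by positivity)
  have hS' : ∀ᶠ n in atTop, (∑ j ∈ Finset.range p, ‖a n j - b j‖ * x ^ j) < ε / 3 * x ^ p :=
    hS.eventually_lt_const (by positivity)
  have hcomb := hF'.and hS'
  rw [eventually_atTop] at hcomb
  obtain ⟨N, hN⟩ := hcomb
  refine ⟨N, fun n hn => ?_⟩
  obtain ⟨h1, h2⟩ := hN n hn
  rw [dist_eq_norm]
  have h3 : 4 * (M * x) ^ (p + 1) ≤ ε / 3 * x ^ p := by
    have : 4 * (M * x) ^ (p + 1) = 4 * M ^ (p + 1) * x * x ^ p := by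
      rw [mul_pow, pow_succ]; ring
    rw [this]
    exact mul_le_mul_of_nonneg_right (by linarith) hxp.le
  have h4 : ‖a n p - b p‖ * x ^ p < ε * x ^ p := by
    calc ‖a n p - b p‖ * x ^ p ≤ _ := key n
      _ < ε / 3 * x ^ p + ε / 3 * x ^ p + ε / 3 * x ^ p := by
          apply add_lt_add_of_lt_of_le (add_lt_add h1 h2) h3
      _ = ε * x ^ p := by ring
  exact lt_of_mul_lt_mul_right h4 hxp.le

/-- For an increasing sequence `k_n` of positive integers and compactly supported probability
measures `μ_n` (with uniformly bounded supports), the Boolean convolution powers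
`σ_n = μ_n^{⊎ k_n}` (characterized by `B_{σ_n} = k_n·B_{μ_n}`) converge in moments to a
compactly supported probability measure `μ` iff
`lim_n k_n·(M_{μ_n}(z) - 1) = B_μ(z)` for all `z` in a neighborhood of `0`. -/
theorem boolean_powers_conv_iff (k : ℕ → ℕ) (hk : StrictMono k) (hk0 : ∀ n, 0 < k n)
    (μn σn : ℕ → Measure ℝ) (μ : Measure ℝ)
    (hprob : ∀ n, IsProbabilityMeasure (μn n) ∧ IsProbabilityMeasure (σn n))
    (hμprob : IsProbabilityMeasure μ)
    (M : ℝ) (hM : 0 < M)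
    (hsupp : ∀ n, (μn n) (Set.Icc (-M) M)ᶜ = 0 ∧ (σn n) (Set.Icc (-M) M)ᶜ = 0)
    (hμsupp : μ (Set.Icc (-M) M)ᶜ = 0)
    (δ : ℝ) (hδ : 0 < δ)
    (hboolpow : ∀ n, ∀ z : ℂ, ‖z‖ < δ → boolT (σn n) z = (k n : ℂ) * boolT (μn n) z) :
    (∀ p : ℕ, Tendsto (fun n => moment (σn n) p) atTop (nhds (moment μ p))) ↔
      ∃ ε : ℝ, 0 < ε ∧ ∀ z : ℂ, ‖z‖ < ε →
        Tendsto (fun n => (k n : ℂ) * (momGen (μn n) z - 1)) atTop (nhds (boolT μ z)) := by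
  have hμni : ∀ n, IsProbabilityMeasure (μn n) := fun n => (hprob n).1
  have hσni : ∀ n, IsProbabilityMeasure (σn n) := fun n => (hprob n).2
  have hM0 : (0:ℝ) ≤ M := hM.le
  set r0 : ℝ := min δ (1 / (2 * M)) with hr0def
  have hr0pos : 0 < r0 := lt_min hδ (by positivity)
  have hsmall : ∀ z : ℂ, ‖z‖ < r0 → M * ‖z‖ < 1 / 2 := by
    intro z hz
    have h1 : ‖z‖ < 1 / (2 * M) := lt_of_lt_of_le hz (min_le_right _ _)
    calc M * ‖z‖ < M * (1 / (2 * M)) := mul_lt_mul_of_pos_left h1 hM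
      _ = 1 / 2 := by field_simp
  have hkR : Tendsto (fun n => (k n : ℝ)) atTop atTop :=
    tendsto_natCast_atTop_atTop.comp hk.tendsto_atTop
  have hkC : ∀ n, ((k n : ℂ)) ≠ 0 := fun n => by exact_mod_cast (hk0 n).ne'
  constructor
  · -- forward direction
    intro hmom
    refine ⟨r0, hr0pos, fun z hz => ?_⟩
    have hz2 := hsmall z hz
    have hz1 : M * ‖z‖ < 1 := by linarith
    have hzδ : ‖z‖ < δ := lt_of_lt_of_le hz (min_le_left _ _)
    have hMσ : Tendsto (fun n => momGen (σn n) z) atTop (nhds (momGen μ z)) := by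
      have heq : ∀ n, momGen (σn n) z = ∑' p, ((moment (σn n) p : ℝ) : ℂ) * z ^ p :=
        fun n => (hasSum_moment_momGen hM0 (hσni n) (hsupp n).2 hz1).tsum_eq.symm
      have heqμ : momGen μ z = ∑' p, ((moment μ p : ℝ) : ℂ) * z ^ p :=
        (hasSum_moment_momGen hM0 hμprob hμsupp hz1).tsum_eq.symm
      simp only [heq, heqμ]
      apply tendsto_tsum_of_dominated_convergence (bound := fun p => (M * ‖z‖) ^ p)
        (summable_geometric_of_lt_one (by positivity) hz1)
      · intro p
        exact (((Complex.continuous_ofReal.tendsto _).comp (hmom p)).mul_const (z ^ p))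
      · filter_upwards with n p
        rw [norm_mul, Complex.norm_real, Real.norm_eq_abs, norm_pow, mul_pow]
        exact mul_le_mul (abs_moment_le hM0 (hσni n) (hsupp n).2 p) le_rfl (by positivity)
          (by positivity)
    have hμne : momGen μ z ≠ 0 := momGen_ne_zero hM0 hμprob hμsupp hz2
    have hBσ : Tendsto (fun n => boolT (σn n) z) atTop (nhds (boolT μ z)) := by
      unfold boolT
      exact tendsto_const_nhds.sub (hMσ.inv₀ hμne)
    set C : ℝ := 1 + (1 - 2 * (M * ‖z‖))⁻¹ with hC
    have hCb : ∀ n, ‖boolT (σn n) z‖ ≤ C := by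
      intro n
      unfold boolT
      calc ‖1 - (momGen (σn n) z)⁻¹‖ ≤ ‖(1:ℂ)‖ + ‖(momGen (σn n) z)⁻¹‖ := norm_sub_le _ _
        _ ≤ C := by
            rw [norm_one, hC]
            exact add_le_add le_rfl (norm_momGen_inv_le hM0 (hσni n) (hsupp n).2 hz2)
    have hBμn : Tendsto (fun n => boolT (μn n) z) atTop (nhds 0) := by
      have heq : ∀ n, boolT (μn n) z = ((k n : ℂ))⁻¹ * boolT (σn n) z := by
        intro n
        rw [hboolpow n z hzδ, ← mul_assoc, inv_mul_cancel₀ (hkC n), one_mul]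
      simp only [heq]
      apply squeeze_zero_norm (a := fun n => ((k n : ℝ))⁻¹ * C)
      · intro n
        rw [norm_mul, norm_inv, Complex.norm_natCast]
        exact mul_le_mul_of_nonneg_left (hCb n) (by positivity)
      · have h2 := hkR.inv_tendsto_atTop
        simpa using h2.mul_const C
    have hμnne : ∀ n, momGen (μn n) z ≠ 0 :=
      fun n => momGen_ne_zero hM0 (hμni n) (hsupp n).1 hz2
    have hMμn : Tendsto (fun n => momGen (μn n) z) atTop (nhds 1) := by
      have heq : ∀ n, momGen (μn n) z = (1 - boolT (μn n) z)⁻¹ := by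
        intro n; unfold boolT; rw [sub_sub_cancel, inv_inv]
      simp only [heq]
      have h1 : Tendsto (fun n => 1 - boolT (μn n) z) atTop (nhds 1) := by
        have := (tendsto_const_nhds (x := (1:ℂ))).sub hBμn
        simpa using this
      simpa using h1.inv₀ one_ne_zero
    have heq2 : ∀ n, (k n : ℂ) * (momGen (μn n) z - 1) =
        boolT (σn n) z * momGen (μn n) z := by
      intro n
      rw [hboolpow n z hzδ]
      unfold boolT
      rw [mul_assoc]
      congr 1
      rw [sub_mul, one_mul, inv_mul_cancel₀ (hμnne n)]
    simp only [heq2]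
    have := hBσ.mul hMμn
    simpa using this
  · -- backward direction
    rintro ⟨ε, hε, hcv⟩
    set ε₁ : ℝ := min ε r0 with hε₁def
    have hε₁pos : 0 < ε₁ := lt_min hε hr0pos
    have hε₁M : M * ε₁ ≤ 1 / 2 := by
      have h1 : ε₁ ≤ 1 / (2 * M) := le_trans (min_le_right _ _) (min_le_right _ _)
      calc M * ε₁ ≤ M * (1 / (2 * M)) := mul_le_mul_of_nonneg_left h1 hM0
        _ = 1 / 2 := by field_simp
    have hMσ : ∀ z : ℂ, ‖z‖ < ε₁ →
        Tendsto (fun n => momGen (σn n) z) atTop (nhds (momGen μ z)) := by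
      intro z hz
      have hzr0 : ‖z‖ < r0 := lt_of_lt_of_le hz (min_le_right _ _)
      have hz2 := hsmall z hzr0
      have hzδ : ‖z‖ < δ := lt_of_lt_of_le hzr0 (min_le_left _ _)
      have hzε : ‖z‖ < ε := lt_of_lt_of_le hz (min_le_left _ _)
      have hμnne : ∀ n, momGen (μn n) z ≠ 0 :=
        fun n => momGen_ne_zero hM0 (hμni n) (hsupp n).1 hz2
      have hμne : momGen μ z ≠ 0 := momGen_ne_zero hM0 hμprob hμsupp hz2
      have hB := hcv z hzε
      have h0 : Tendsto (fun n => momGen (μn n) z - 1) atTop (nhds 0) := by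
        have hkinv : Tendsto (fun n => ((k n : ℂ))⁻¹) atTop (nhds 0) := by
          rw [tendsto_zero_iff_norm_tendsto_zero]
          simp only [norm_inv, Complex.norm_natCast]
          exact hkR.inv_tendsto_atTop
        have h1 := hkinv.mul hB
        rw [zero_mul] at h1
        apply h1.congr
        intro n
        rw [← mul_assoc, inv_mul_cancel₀ (hkC n), one_mul]
      have hMμn1 : Tendsto (fun n => momGen (μn n) z) atTop (nhds 1) := by
        have := h0.add (tendsto_const_nhds (x := (1:ℂ)))
        simpa using this
      have hBσ : Tendsto (fun n => boolT (σn n) z) atTop (nhds (boolT μ z)) := by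
        have heq : ∀ n, boolT (σn n) z =
            ((k n : ℂ) * (momGen (μn n) z - 1)) * (momGen (μn n) z)⁻¹ := by
          intro n
          rw [hboolpow n z hzδ]
          unfold boolT
          rw [mul_assoc]
          congr 1
          rw [sub_mul, one_mul, mul_inv_cancel₀ (hμnne n)]
        simp only [heq]
        have hlim := hB.mul (hMμn1.inv₀ one_ne_zero)
        simpa using hlim
      have heq2 : ∀ n, momGen (σn n) z = (1 - boolT (σn n) z)⁻¹ := by
        intro n; unfold boolT; rw [sub_sub_cancel, inv_inv]
      have hne2 : (1:ℂ) - boolT μ z ≠ 0 := by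
        unfold boolT; rw [sub_sub_cancel]; exact inv_ne_zero hμne
      have hfin := (tendsto_const_nhds.sub hBσ).inv₀ hne2
      simp only [heq2]
      have hval : ((1:ℂ) - boolT μ z)⁻¹ = momGen μ z := by
        unfold boolT; rw [sub_sub_cancel, inv_inv]
      rwa [hval] at hfin
    intro p
    have hcoeff : Tendsto (fun n => ((moment (σn n) p : ℝ) : ℂ)) atTop
        (nhds ((moment μ p : ℝ) : ℂ)) := by
      apply coeff_tendsto hM (a := fun n q => ((moment (σn n) q : ℝ) : ℂ))
        (b := fun q => ((moment μ q : ℝ) : ℂ)) ?_ ?_ hε₁pos hε₁M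
      · intro x hx0 hxr
        have hxn : ‖((x : ℝ) : ℂ)‖ < ε₁ := by
          rw [Complex.norm_real, Real.norm_of_nonneg hx0.le]; exact hxr
        have hz1 : M * ‖((x : ℝ) : ℂ)‖ < 1 := by
          have := hsmall _ (lt_of_lt_of_le hxn (min_le_right _ _)); linarith
        have h1 := hMσ ((x : ℝ) : ℂ) hxn
        have heq : ∀ n, (∑' q, ((moment (σn n) q : ℝ) : ℂ) * ((x : ℝ) : ℂ) ^ q) =
            momGen (σn n) ((x : ℝ) : ℂ) :=
          fun n => (hasSum_moment_momGen hM0 (hσni n) (hsupp n).2 hz1).tsum_eq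
        have heqμ : (∑' q, ((moment μ q : ℝ) : ℂ) * ((x : ℝ) : ℂ) ^ q) =
            momGen μ ((x : ℝ) : ℂ) :=
          (hasSum_moment_momGen hM0 hμprob hμsupp hz1).tsum_eq
        simp only [heq, heqμ]
        exact h1
      · intro n q
        rw [Complex.norm_real, Real.norm_eq_abs]
        exact abs_moment_le hM0 (hσni n) (hsupp n).2 q
      · intro q
        rw [Complex.norm_real, Real.norm_eq_abs]
        exact abs_moment_le hM0 hμprob hμsupp q
    have := (Complex.continuous_re.tendsto _).comp hcoeff
    exact this
end

section
/- Let (μ,ν) be a pair of compactly supported probability measures on ℝ with ∫t dν(t) ≠ 0, and define the c-free T-transform ᶜT_{(μ,ν)}(z) = ᶜR_{μ,ν}(R_ν^{-1}(z)) / R_ν^{-1}(z), where ᶜR is the c-free R-transform determined by (M_μ(z)-1)·M_ν(z) = M_μ(z)·ᶜR_{μ,ν}(z·M_ν(z)). Then ᶜT_{(μ,ν)}(z) = B_μ(M̃_ν^{-1}(z)) / M̃_ν^{-1}(z) on a neighborhood of 0, where B_μ is the Boolean transform of μ and M̃_ν^{-1} the compositional inverse of M̃_ν = M_ν - 1. 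-/
open MeasureTheory Metric

/-- `M̃_σ = M_σ - 1`. -/
noncomputable def momGenT (σ : Measure ℝ) (z : ℂ) : ℂ := momGen σ z - 1

lemma momGen_analyticAt (σ : Measure ℝ) [IsFiniteMeasure σ] {R : ℝ}
    (hsupp : σ (Set.Icc (-R) R)ᶜ = 0) :
    AnalyticAt ℂ (momGen σ) 0 := by
  set R' : ℝ := max R 1 with hR'
  have hR1 : (1:ℝ) ≤ R' := le_max_right _ _
  have hR0 : (0:ℝ) < R' := lt_of_lt_of_le one_pos hR1
  have hae : ∀ᵐ t ∂σ, |t| ≤ R' := by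
    have h1 : ∀ᵐ t ∂σ, t ∈ Set.Icc (-R) R := by
      rw [Filter.eventually_iff]
      exact mem_ae_iff.mpr hsupp
    filter_upwards [h1] with t ht
    rw [abs_le]
    exact ⟨le_trans (neg_le_neg (le_max_left R 1)) ht.1, le_trans ht.2 (le_max_left R 1)⟩
  set r : ℝ := (2 * R')⁻¹ with hr
  have hrpos : (0:ℝ) < r := by positivity
  have key : ∀ t : ℝ, |t| ≤ R' → ∀ z : ℂ, ‖z‖ < r → (1:ℝ)/2 ≤ ‖(1 : ℂ) - (t:ℂ) * z‖ := by
    intro t ht z hz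
    have h1 : ‖(t:ℂ) * z‖ ≤ 1/2 := by
      rw [norm_mul, Complex.norm_real, Real.norm_eq_abs]
      calc |t| * ‖z‖ ≤ R' * r := by
            apply mul_le_mul ht hz.le (norm_nonneg _) hR0.le
        _ = 1/2 := by rw [hr]; field_simp
    have := norm_sub_norm_le (1 : ℂ) ((t:ℂ) * z)
    rw [norm_one] at this
    linarith
  have hne : ∀ t : ℝ, |t| ≤ R' → ∀ z : ℂ, ‖z‖ < r → (1 : ℂ) - (t:ℂ) * z ≠ 0 := by
    intro t ht z hz h0
    have := key t ht z hz
    rw [h0, norm_zero] at this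
    linarith
  have hmeas : ∀ z : ℂ, AEStronglyMeasurable (fun t : ℝ => ((1 : ℂ) - (t : ℂ) * z)⁻¹) σ := by
    intro z
    apply Measurable.aestronglyMeasurable
    apply Measurable.inv
    fun_prop
  have hdiff : DifferentiableOn ℂ (momGen σ) (ball (0:ℂ) r) := by
    intro x₀ hx₀
    have hx₀' : ‖x₀‖ < r := by simpa [mem_ball, dist_eq_norm] using hx₀
    have hεpos : (0:ℝ) < r - ‖x₀‖ := by linarith
    have hball : ∀ z : ℂ, z ∈ ball x₀ (r - ‖x₀‖) → ‖z‖ < r := by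
      intro z hz
      rw [mem_ball, dist_eq_norm] at hz
      calc ‖z‖ = ‖z - x₀ + x₀‖ := by ring_nf
        _ ≤ ‖z - x₀‖ + ‖x₀‖ := norm_add_le _ _
        _ < r := by linarith
    have hmeas' : AEStronglyMeasurable
        (fun t : ℝ => (t:ℂ) / ((1 : ℂ) - (t : ℂ) * x₀)^2) σ := by
      apply Measurable.aestronglyMeasurable
      apply Measurable.div <;> fun_prop
    have hint : Integrable (fun t : ℝ => ((1 : ℂ) - (t : ℂ) * x₀)⁻¹) σ := by
      apply Integrable.mono' (integrable_const (2:ℝ)) (hmeas x₀)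
      filter_upwards [hae] with t ht
      rw [norm_inv]
      have h2 := key t ht x₀ hx₀'
      rw [inv_le_comm₀ (by linarith) (by norm_num)]
      linarith
    have hbound : ∀ᵐ t : ℝ ∂σ, ∀ z ∈ ball x₀ (r - ‖x₀‖),
        ‖(t:ℂ) / ((1 : ℂ) - (t : ℂ) * z)^2‖ ≤ 4 * R' := by
      filter_upwards [hae] with t ht z hz
      have h2 := key t ht z (hball z hz)
      rw [norm_div, norm_pow, Complex.norm_real, Real.norm_eq_abs]
      have hn2 : (1:ℝ)/4 ≤ ‖(1 : ℂ) - (t:ℂ) * z‖^2 := by nlinarith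
      rw [div_le_iff₀ (by nlinarith)]
      nlinarith [abs_nonneg t]
    have hderiv : ∀ᵐ t : ℝ ∂σ, ∀ z ∈ ball x₀ (r - ‖x₀‖),
        HasDerivAt (fun w : ℂ => ((1 : ℂ) - (t : ℂ) * w)⁻¹)
          ((t:ℂ) / ((1 : ℂ) - (t : ℂ) * z)^2) z := by
      filter_upwards [hae] with t ht z hz
      have h0 : (1 : ℂ) - (t:ℂ) * z ≠ 0 := hne t ht z (hball z hz)
      have h1 : HasDerivAt (fun w : ℂ => (1 : ℂ) - (t:ℂ) * w) (-(t:ℂ)) z := by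
        have h := ((hasDerivAt_id z).const_mul (t:ℂ)).const_sub (1:ℂ)
        simpa using h
      have h2 := h1.inv h0
      rw [show (t:ℂ) / ((1 : ℂ) - (t : ℂ) * z)^2 = -(-(t:ℂ)) / ((1 : ℂ) - (t : ℂ) * z)^2 by ring]
      exact h2
    have := hasDerivAt_integral_of_dominated_loc_of_deriv_le (μ := σ)
      (F := fun (z:ℂ) (t:ℝ) => ((1 : ℂ) - (t : ℂ) * z)⁻¹)
      (F' := fun (z:ℂ) (t:ℝ) => (t:ℂ) / ((1 : ℂ) - (t : ℂ) * z)^2) (ball_mem_nhds x₀ hεpos)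
      (Filter.Eventually.of_forall (fun z => hmeas z)) hint hmeas' hbound
      (integrable_const _) hderiv
    exact this.2.differentiableAt.differentiableWithinAt
  exact hdiff.analyticAt (ball_mem_nhds 0 hrpos)

lemma momGen_zero (σ : Measure ℝ) [IsProbabilityMeasure σ] : momGen σ 0 = 1 := by
  simp [momGen]

/-- For a pair `(μ,ν)` with `ν` of nonzero mean, the c-free T-transform
`ᶜT_{(μ,ν)}(z) = ᶜR_{μ,ν}(R_ν⁻¹(z))/R_ν⁻¹(z)` equals `B_μ(M̃_ν⁻¹(z))/M̃_ν⁻¹(z)` near `0`. -/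
theorem cfree_T_transform_eq (μ ν : Measure ℝ)
    [IsProbabilityMeasure μ] [IsProbabilityMeasure ν]
    (hμsupp : ∃ R : ℝ, μ (Set.Icc (-R) R)ᶜ = 0)
    (hνsupp : ∃ R : ℝ, ν (Set.Icc (-R) R)ᶜ = 0)
    (hmean : (∫ t : ℝ, t ∂ν) ≠ 0)
    (R Rinv Minv cR : ℂ → ℂ) (δ : ℝ) (hδ : 0 < δ)
    (hR : ∀ z : ℂ, ‖z‖ < δ → momGenT ν z = R (z + z * momGenT ν z))
    (hRinv₁ : ∀ z : ℂ, ‖z‖ < δ → Rinv (R z) = z)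
    (hRinv₂ : ∀ z : ℂ, ‖z‖ < δ → R (Rinv z) = z)
    (hMinv₁ : ∀ z : ℂ, ‖z‖ < δ → Minv (momGenT ν z) = z)
    (hMinv₂ : ∀ z : ℂ, ‖z‖ < δ → momGenT ν (Minv z) = z)
    (hcR : ∀ z : ℂ, ‖z‖ < δ →
      (momGen μ z - 1) * momGen ν z = momGen μ z * cR (z * momGen ν z)) :
    ∃ ε : ℝ, 0 < ε ∧ ∀ z : ℂ, ‖z‖ < ε →
      cR (Rinv z) / Rinv z = boolT μ (Minv z) / Minv z := by
  obtain ⟨Rν, hRν⟩ := hνsupp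
  have hA : AnalyticAt ℂ (momGenT ν) 0 := by
    have h : AnalyticAt ℂ (fun z : ℂ => momGen ν z - 1) 0 :=
      (momGen_analyticAt ν hRν).sub analyticAt_const
    exact h
  have f0 : momGenT ν 0 = 0 := by rw [momGenT, momGen_zero]; ring
  -- not eventually constant
  have hnc : ¬ (∀ᶠ z in nhds (0:ℂ), momGenT ν z = momGenT ν 0) := by
    intro h
    rw [Metric.eventually_nhds_iff] at h
    obtain ⟨r, hr, hb⟩ := h
    set t : ℂ := (((min r δ) / 2 : ℝ) : ℂ) with ht
    have htn : ‖t‖ = (min r δ) / 2 := by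
      rw [ht, Complex.norm_real, Real.norm_eq_abs, abs_of_pos (by positivity)]
    have ht0 : t ≠ 0 := by
      intro h0
      rw [h0, norm_zero] at htn
      have : (0:ℝ) < min r δ / 2 := by positivity
      linarith
    have htr : ‖t‖ < r := by
      rw [htn]
      have : min r δ ≤ r := min_le_left _ _
      linarith
    have htδ : ‖t‖ < δ := by
      rw [htn]
      have : min r δ ≤ δ := min_le_right _ _
      linarith
    have h1 : momGenT ν t = momGenT ν 0 := hb (by simpa [dist_eq_norm] using htr)
    have h2 : Minv (momGenT ν t) = t := hMinv₁ t htδ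
    rw [h1, f0] at h2
    have h3 := hMinv₁ 0 (by simpa using hδ)
    rw [f0] at h3
    exact ht0 (by rw [← h2, h3])
  have hmap : nhds (0:ℂ) ≤ Filter.map (momGenT ν) (nhds 0) := by
    have := hA.eventually_constant_or_nhds_le_map_nhds.resolve_left hnc
    rwa [f0] at this
  have himg : momGenT ν '' (ball (0:ℂ) (δ/2)) ∈ nhds (0:ℂ) := by
    apply hmap
    rw [Filter.mem_map]
    exact Filter.mem_of_superset (ball_mem_nhds 0 (by linarith)) (Set.subset_preimage_image _ _)
  obtain ⟨ε₀, hε₀, hball₀⟩ := Metric.mem_nhds_iff.mp himg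
  refine ⟨min ε₀ (min δ (1/2)), by positivity, ?_⟩
  intro z hz
  have hzε₀ : ‖z‖ < ε₀ := lt_of_lt_of_le hz (min_le_left _ _)
  have hzδ : ‖z‖ < δ := lt_of_lt_of_le hz (le_trans (min_le_right _ _) (min_le_left _ _))
  have hzhalf : ‖z‖ < 1/2 := lt_of_lt_of_le hz (le_trans (min_le_right _ _) (min_le_right _ _))
  obtain ⟨w, hw, hwz⟩ := hball₀ (by simpa [mem_ball, dist_eq_norm] using hzε₀)
  have hwδ2 : ‖w‖ < δ/2 := by simpa [mem_ball, dist_eq_norm] using hw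
  have hwδ : ‖w‖ < δ := by linarith
  have hMw : momGen ν w = 1 + z := by
    have h : momGen ν w - 1 = z := hwz
    linear_combination h
  have hz1 : (1:ℂ) + z ≠ 0 := by
    intro h0
    have : z = -1 := by linear_combination h0
    rw [this] at hzhalf
    norm_num at hzhalf
  have hMinvz : Minv z = w := by rw [← hwz]; exact hMinv₁ w hwδ
  have hwz1 : ‖w * (1 + z)‖ < δ := by
    rw [norm_mul]
    have h1 : ‖(1:ℂ) + z‖ ≤ 1 + ‖z‖ := by
      calc ‖(1:ℂ) + z‖ ≤ ‖(1:ℂ)‖ + ‖z‖ := norm_add_le _ _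
        _ = 1 + ‖z‖ := by rw [norm_one]
    nlinarith [norm_nonneg w, norm_nonneg ((1:ℂ)+z)]
  have hRw : z = R (w * (1 + z)) := by
    have h := hR w hwδ
    rw [hwz] at h
    have he : w + w * z = w * (1 + z) := by ring
    rw [he] at h
    exact h
  have hRinvz : Rinv z = w * (1 + z) := by
    have h4 := hRinv₁ (w * (1 + z)) hwz1
    rw [← hRw] at h4
    exact h4
  have hcRw := hcR w hwδ
  rw [hMw] at hcRw
  have hMμ : momGen μ w ≠ 0 := by
    intro h0
    rw [h0] at hcRw
    exact hz1 (by linear_combination -hcRw)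
  by_cases hw0 : w = 0
  · rw [hRinvz, hMinvz, hw0]
    simp
  · rw [hRinvz, hMinvz, boolT]
    have hcRval : cR (w * (1 + z)) = (momGen μ w - 1) * (1 + z) / momGen μ w := by
      field_simp
      linear_combination -hcRw
    rw [hcRval]
    field_simp
end
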